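/- Let X ∈ 𝕊ⁿ be PSD with unit trace and rank(X) ≥ 2, and let v be a unit vector in Im(X). Then λ := (vᵀX†v)⁻¹ satisfies λ ≤ vᵀXv ≤ 1 − λ_r(X) < 1, where λ_r(X) is the smallest nonzero eigenvalue of X; in particular λ < 1, so the away-step matrix (1−λ)⁻¹(X − λ v vᵀ) is well defined and lies in 𝒮ⁿ. -/

import Mathlib

open Matrix

/-- `Xd` is the Moore–Penrose pseudoinverse of `X`. -/
def IsMoorePenroseInv {n : ℕ} (X Xd : Matrix (Fin n) (Fin n) ℝ) : Prop :=
  X * Xd * X = X ∧ Xd * X * Xd = Xd ∧ (X * Xd)ᵀ = X * Xd ∧ (Xd * X)ᵀ = Xd * X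

/-- The spectrahedron: real symmetric PSD matrices with unit trace. -/
def Spectrahedron {n : ℕ} (X : Matrix (Fin n) (Fin n) ℝ) : Prop :=
  X.PosSemidef ∧ X.trace = 1

section Helpers

variable {n : ℕ}

lemma dot_shift (A : Matrix (Fin n) (Fin n) ℝ) (a b : Fin n → ℝ) :
    (A *ᵥ a) ⬝ᵥ b = a ⬝ᵥ (Aᵀ *ᵥ b) := by
  rw [dotProduct_mulVec, vecMul_transpose]

lemma symm_dot {X : Matrix (Fin n) (Fin n) ℝ} (hs : Xᵀ = X) (a b : Fin n → ℝ) :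
    a ⬝ᵥ X *ᵥ b = (X *ᵥ a) ⬝ᵥ b := by
  rw [dot_shift, hs]

lemma psd_cs {X : Matrix (Fin n) (Fin n) ℝ} (hX : X.PosSemidef) (a b : Fin n → ℝ) :
    (a ⬝ᵥ X *ᵥ b) ^ 2 ≤ (a ⬝ᵥ X *ᵥ a) * (b ⬝ᵥ X *ᵥ b) := by
  obtain ⟨S, hSsymm, hS⟩ : ∃ S : Matrix (Fin n) (Fin n) ℝ, Sᵀ = S ∧ S * S = X :=
    by open scoped MatrixOrder in
      exact ⟨CFC.sqrt X, (by rw [← conjTranspose_eq_transpose_of_trivial];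
                              exact (CFC.sqrt_nonneg X).posSemidef.isHermitian), CFC.sqrt_mul_sqrt_self X hX.nonneg⟩
  have key : ∀ x y : Fin n → ℝ, x ⬝ᵥ X *ᵥ y = (S *ᵥ x) ⬝ᵥ (S *ᵥ y) := by
    intro x y
    rw [← hS, ← mulVec_mulVec, symm_dot hSsymm]
  rw [key a b, key a a, key b b]
  have := Finset.sum_mul_sq_le_sq_mul_sq Finset.univ (S *ᵥ a) (S *ᵥ b)
  simpa only [dotProduct, pow_two] using this

lemma psd_nonneg {X : Matrix (Fin n) (Fin n) ℝ} (hX : X.PosSemidef) (a : Fin n → ℝ) :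
    0 ≤ a ⬝ᵥ X *ᵥ a := by simpa using hX.dotProduct_mulVec_nonneg a

lemma spectral_stuff {X : Matrix (Fin n) (Fin n) ℝ} (hX : X.PosSemidef) (v : Fin n → ℝ) :
    ∃ c : Fin n → ℝ, (v ⬝ᵥ X *ᵥ v = ∑ i, hX.isHermitian.eigenvalues i * c i ^ 2)
      ∧ (∑ i, c i ^ 2 = v ⬝ᵥ v) ∧ (∑ i, hX.isHermitian.eigenvalues i = X.trace) := by
  have hH := hX.isHermitian
  obtain ⟨U, hUU, hUU', hspec⟩ : ∃ U : Matrix (Fin n) (Fin n) ℝ,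
      U * star U = 1 ∧ star U * U = 1 ∧
      X = U * diagonal hH.eigenvalues * star U := by
    refine ⟨hH.eigenvectorUnitary, (Matrix.mem_unitaryGroup_iff).mp hH.eigenvectorUnitary.2,
      (Matrix.mem_unitaryGroup_iff').mp hH.eigenvectorUnitary.2, ?_⟩
    have := hH.spectral_theorem
    simpa [RCLike.ofReal_real_eq_id] using this
  set c : Fin n → ℝ := star U *ᵥ v with hc
  have hvU : v ᵥ* U = c := by
    rw [hc, Matrix.star_eq_conjTranspose, conjTranspose_eq_transpose_of_trivial, mulVec_transpose]
  refine ⟨c, ?_, ?_, ?_⟩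
  · conv_lhs => rw [hspec]
    rw [← mulVec_mulVec, ← mulVec_mulVec, dotProduct_mulVec, hvU]
    simp only [dotProduct, mulVec_diagonal]
    exact Finset.sum_congr rfl fun i _ => by ring
  · have : c ⬝ᵥ c = v ⬝ᵥ v := by
      calc c ⬝ᵥ c = (v ᵥ* U) ⬝ᵥ (star U *ᵥ v) := by rw [hvU]
      _ = v ⬝ᵥ (U *ᵥ (star U *ᵥ v)) := by rw [← dotProduct_mulVec]
      _ = v ⬝ᵥ v := by rw [mulVec_mulVec, hUU, one_mulVec]
    simpa [dotProduct, pow_two] using this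
  · conv_rhs => rw [hspec]
    rw [trace_mul_cycle, hUU', one_mul, trace_diagonal]


end Helpers

theorem stmt19 {n r : ℕ} (X Xd : Matrix (Fin n) (Fin n) ℝ) (v : Fin n → ℝ) (lamr : ℝ)
    (hX : X.PosSemidef) (htr : X.trace = 1) (hrank : X.rank = r) (hr : 2 ≤ r)
    (hXd : IsMoorePenroseInv X Xd)
    (hv : ∃ w, X.mulVec w = v) (hvunit : v ⬝ᵥ v = 1)
    (hlamr : IsLeast {x | x ≠ 0 ∧ ∃ i, hX.isHermitian.eigenvalues i = x} lamr) :
    (v ⬝ᵥ Xd.mulVec v)⁻¹ ≤ v ⬝ᵥ X.mulVec v ∧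
    v ⬝ᵥ X.mulVec v ≤ 1 - lamr ∧ 1 - lamr < 1 ∧
    (v ⬝ᵥ Xd.mulVec v)⁻¹ < 1 ∧
    Spectrahedron ((1 - (v ⬝ᵥ Xd.mulVec v)⁻¹)⁻¹ • (X - (v ⬝ᵥ Xd.mulVec v)⁻¹ • vecMulVec v v)) := by
  obtain ⟨h1, h2, h3, h4⟩ := hXd
  obtain ⟨w, hw⟩ := hv
  have hsymmX : Xᵀ = X := by
    rw [← conjTranspose_eq_transpose_of_trivial]; exact hX.isHermitian
  set u : Fin n → ℝ := Xd *ᵥ v with hu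
  set α : ℝ := v ⬝ᵥ u with hα
  have hPv : (X * Xd) *ᵥ v = v := by
    rw [← hw, mulVec_mulVec, h1]
  have hXdtX : Xdᵀ * X = X * Xd := by
    calc Xdᵀ * X = (X * Xd)ᵀ := by rw [transpose_mul, hsymmX]
    _ = X * Xd := h3
  have h_vy : ∀ y : Fin n → ℝ, u ⬝ᵥ X *ᵥ y = v ⬝ᵥ y := by
    intro y
    calc u ⬝ᵥ X *ᵥ y = (Xd *ᵥ v) ⬝ᵥ (X *ᵥ y) := by rw [hu]
    _ = v ⬝ᵥ (Xdᵀ *ᵥ (X *ᵥ y)) := dot_shift ..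
    _ = v ⬝ᵥ ((Xdᵀ * X) *ᵥ y) := by rw [mulVec_mulVec]
    _ = v ⬝ᵥ ((X * Xd) *ᵥ y) := by rw [hXdtX]
    _ = ((X * Xd) *ᵥ v) ⬝ᵥ y := symm_dot h3 v y
    _ = v ⬝ᵥ y := by rw [hPv]
  have h_uXu : u ⬝ᵥ X *ᵥ u = α := h_vy u
  have h_vXu : v ⬝ᵥ X *ᵥ u = 1 := by
    rw [hu, mulVec_mulVec, hPv, hvunit]
  have hq0 : 0 ≤ v ⬝ᵥ X *ᵥ v := psd_nonneg hX v
  have hCS : 1 ≤ (v ⬝ᵥ X *ᵥ v) * α := by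
    have := psd_cs hX v u
    rw [h_vXu, h_uXu, one_pow] at this
    exact this
  have hα0 : 0 ≤ α := h_uXu ▸ psd_nonneg hX u
  have hαne : α ≠ 0 := by intro h; rw [h, mul_zero] at hCS; linarith
  have hα_pos : 0 < α := lt_of_le_of_ne hα0 (Ne.symm hαne)
  have part1 : α⁻¹ ≤ v ⬝ᵥ X *ᵥ v := by
    rw [inv_eq_one_div, div_le_iff₀ hα_pos]; linarith
  -- spectral part
  obtain ⟨c, hquad, hc2, hsumtr⟩ := spectral_stuff hX v
  have hμnn : ∀ i, 0 ≤ hX.isHermitian.eigenvalues i := fun i => hX.eigenvalues_nonneg i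
  have hsum : ∑ i, hX.isHermitian.eigenvalues i = 1 := by rw [hsumtr, htr]
  have hc1 : ∑ i, c i ^ 2 = 1 := by rw [hc2, hvunit]
  have hlam_pos : 0 < lamr := by
    obtain ⟨hne, i, hi⟩ := hlamr.1
    exact lt_of_le_of_ne (hi ▸ hμnn i) (Ne.symm hne)
  have hcard : 2 ≤ Fintype.card {i // hX.isHermitian.eigenvalues i ≠ 0} := by
    rw [← hX.isHermitian.rank_eq_card_non_zero_eigs]; omega
  have hbound : ∀ k, hX.isHermitian.eigenvalues k ≤ 1 - lamr := by
    intro k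
    by_cases hk : hX.isHermitian.eigenvalues k = 0
    · rw [hk]
      obtain ⟨_, i, hi⟩ := hlamr.1
      have h5 : hX.isHermitian.eigenvalues i ≤ ∑ j, hX.isHermitian.eigenvalues j :=
        Finset.single_le_sum (fun j _ => hμnn j) (Finset.mem_univ i)
      rw [hi, hsum] at h5
      linarith
    · obtain ⟨⟨j, hj⟩, hjk⟩ :=
        Fintype.exists_ne_of_one_lt_card (by omega) (⟨k, hk⟩ : {i // hX.isHermitian.eigenvalues i ≠ 0})
      have hjk' : k ≠ j := fun h => hjk (Subtype.ext h.symm)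
      have hlj : lamr ≤ hX.isHermitian.eigenvalues j := hlamr.2 ⟨hj, j, rfl⟩
      have hpair : hX.isHermitian.eigenvalues k + hX.isHermitian.eigenvalues j
          ≤ ∑ i, hX.isHermitian.eigenvalues i := by
        have h6 := Finset.sum_le_sum_of_subset_of_nonneg
          (Finset.subset_univ ({k, j} : Finset (Fin n))) (fun i _ _ => hμnn i)
        rwa [Finset.sum_insert (by simpa using hjk'), Finset.sum_singleton] at h6
      rw [hsum] at hpair
      linarith
  have part2 : v ⬝ᵥ X *ᵥ v ≤ 1 - lamr := by
    rw [hquad]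
    calc ∑ i, hX.isHermitian.eigenvalues i * c i ^ 2 ≤ ∑ i, (1 - lamr) * c i ^ 2 :=
      Finset.sum_le_sum fun i _ => mul_le_mul_of_nonneg_right (hbound i) (sq_nonneg _)
    _ = 1 - lamr := by rw [← Finset.mul_sum, hc1, mul_one]
  have part3 : 1 - lamr < 1 := by linarith
  have part4 : α⁻¹ < 1 := by linarith
  have honeml : 0 < 1 - α⁻¹ := by linarith
  -- PSD of the away-step matrix
  have hvvsymm : (vecMulVec v v)ᵀ = vecMulVec v v := by
    ext i j; simp [vecMulVec_apply, mul_comm]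
  have hvvquad : ∀ y : Fin n → ℝ, y ⬝ᵥ (vecMulVec v v) *ᵥ y = (v ⬝ᵥ y) * (v ⬝ᵥ y) := by
    intro y
    have h8 : (v ⬝ᵥ y) * (v ⬝ᵥ y) = ∑ i, ∑ j, (v i * y i) * (v j * y j) := by
      simp only [dotProduct]; rw [Finset.sum_mul_sum]
    rw [h8]
    simp only [mulVec, dotProduct, vecMulVec_apply, Finset.mul_sum]
    exact Finset.sum_congr rfl fun i _ => Finset.sum_congr rfl fun j _ => by ring
  have hNherm : (X - α⁻¹ • vecMulVec v v).IsHermitian := by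
    rw [IsHermitian, conjTranspose_eq_transpose_of_trivial, transpose_sub, transpose_smul,
      hvvsymm, hsymmX]
  have hNquad : ∀ y : Fin n → ℝ, 0 ≤ y ⬝ᵥ (X - α⁻¹ • vecMulVec v v) *ᵥ y := by
    intro y
    rw [sub_mulVec, dotProduct_sub, smul_mulVec, dotProduct_smul, hvvquad, smul_eq_mul]
    have hcs := psd_cs hX u y
    rw [h_vy y, h_uXu] at hcs
    have h7 := mul_le_mul_of_nonneg_left hcs (le_of_lt (inv_pos.mpr hα_pos))
    rw [← mul_assoc, inv_mul_cancel₀ hαne, one_mul] at h7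
    rw [pow_two] at h7
    linarith
  have htrvv : (vecMulVec v v).trace = 1 := by
    simpa [Matrix.trace, Matrix.diag, vecMulVec_apply, dotProduct] using hvunit
  refine ⟨part1, part2, part3, part4, ⟨⟨?_, fun y => ?_⟩, ?_⟩⟩
  · rw [IsHermitian, conjTranspose_eq_transpose_of_trivial, transpose_smul,
      show (X - α⁻¹ • vecMulVec v v)ᵀ = X - α⁻¹ • vecMulVec v v from by
        rw [← conjTranspose_eq_transpose_of_trivial]; exact hNherm]
  · exact (PosSemidef.of_dotProduct_mulVec_nonneg
      (by rw [IsHermitian, conjTranspose_smul, hNherm.eq, star_trivial]) fun y => by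
        rw [smul_mulVec, dotProduct_smul, smul_eq_mul, star_trivial]
        exact mul_nonneg (le_of_lt (inv_pos.mpr honeml)) (hNquad y)).2 y
  · rw [trace_smul, trace_sub, trace_smul, htr, htrvv, smul_eq_mul, smul_eq_mul, mul_one,
      inv_mul_cancel₀ (ne_of_gt honeml)]
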